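/- Let β > 0, a ∈ ℝ, and let s > 0 satisfy s^β > |a|. Then ∫_0^∞ e^(-st) (1 − E_β(-a t^β)) dt = a / (s (s^β + a)), and in particular the integral converges absolutely. -/

import Mathlib

open MeasureTheory Real Filter
open scoped ENNReal NNReal

/-- The two-parameter Mittag-Leffler function `E_{α,β}(x) = ∑_{k=0}^∞ x^k / Γ(αk + β)`;
the one-parameter function is `E_β = E_{β,1}`. -/
noncomputable def mittagLeffler (α β x : ℝ) : ℝ :=
  ∑' k : ℕ, x ^ k / Real.Gamma (α * k + β)


lemma summable_ml (β : ℝ) (hβ : 0 < β) (x : ℝ) :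
    Summable (fun k : ℕ => x ^ k / Real.Gamma (β * k + 1)) := by
  set R : ℝ := max 1 ((2 * |x| + 2) ^ (1 / β)) with hRdef
  have hR1 : (1 : ℝ) ≤ R := le_max_left _ _
  have hR0 : (0 : ℝ) < R := lt_of_lt_of_le one_pos hR1
  have hc0 : (0 : ℝ) < 2 * |x| + 2 := by positivity
  have hRβ : 2 * |x| + 2 ≤ R ^ β := by
    have h1 : ((2 * |x| + 2) ^ (1 / β)) ^ β ≤ R ^ β :=
      Real.rpow_le_rpow (by positivity) (le_max_right _ _) hβ.le
    rwa [← Real.rpow_mul hc0.le, one_div,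
      inv_mul_cancel₀ hβ.ne', Real.rpow_one] at h1
  have key : ∀ k : ℕ, 1 ≤ β * k →
      ‖x ^ k / Real.Gamma (β * k + 1)‖ ≤ (Real.exp R * R) * (1 / 2) ^ k := by
    intro k hk
    have hbk : (0:ℝ) < β * k := lt_of_lt_of_le one_pos hk
    set n : ℕ := ⌊β * k⌋₊ with hn
    have hn1 : 1 ≤ n := Nat.le_floor (by exact_mod_cast hk)
    have hnle : (n : ℝ) ≤ β * k := Nat.floor_le hbk.le
    have hnge : β * k ≤ (n : ℝ) + 1 := (Nat.lt_floor_add_one _).le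
    -- Gamma lower bound via factorial
    have hmono := Real.Gamma_strictMonoOn_Ici.monotoneOn
    have hΓ1 : Real.Gamma ((n : ℝ) + 1) ≤ Real.Gamma (β * k + 1) := by
      refine hmono ?_ ?_ (by linarith)
      · simp only [Set.mem_Ici]
        have : (1:ℝ) ≤ (n:ℝ) := by exact_mod_cast hn1
        linarith
      · simp only [Set.mem_Ici]; linarith
    have hΓfac : Real.Gamma ((n : ℝ) + 1) = (Nat.factorial n : ℝ) := by
      exact_mod_cast Real.Gamma_nat_eq_factorial n
    have hfac : R ^ (β * k - 1) / Real.exp R ≤ (Nat.factorial n : ℝ) := by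
      have h1 : R ^ n / (Nat.factorial n : ℝ) ≤ Real.exp R :=
        Real.pow_div_factorial_le_exp (x := R) hR0.le n
      have h2 : R ^ (β * k - 1) ≤ R ^ (n : ℕ) := by
        rw [← Real.rpow_natCast R n]
        exact Real.rpow_le_rpow_of_exponent_le hR1 (by linarith)
      have hfacpos : (0:ℝ) < (Nat.factorial n : ℝ) := by positivity
      rw [div_le_iff₀ (Real.exp_pos R)]
      rw [div_le_iff₀ hfacpos] at h1
      calc R ^ (β * k - 1) ≤ R ^ (n:ℕ) := h2
        _ ≤ Real.exp R * (Nat.factorial n : ℝ) := h1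
        _ = (Nat.factorial n : ℝ) * Real.exp R := mul_comm _ _
    have hΓpos : (0:ℝ) < Real.Gamma (β * k + 1) := Real.Gamma_pos_of_pos (by linarith)
    have hΓlb : R ^ (β * k - 1) / Real.exp R ≤ Real.Gamma (β * k + 1) := by
      rw [hΓfac] at hΓ1; linarith
    have hnorm : ‖x ^ k / Real.Gamma (β * k + 1)‖ = |x| ^ k / Real.Gamma (β * k + 1) := by
      rw [norm_div, norm_pow, Real.norm_eq_abs, Real.norm_eq_abs, abs_of_pos hΓpos]
    rw [hnorm]
    have hRb : R ^ (β * k - 1) = (R ^ β) ^ k / R := by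
      rw [sub_eq_add_neg, Real.rpow_add hR0, Real.rpow_neg_one,
        ← Real.rpow_natCast (R ^ β) k, ← Real.rpow_mul hR0.le]
      ring_nf
    have hRβpos : (0:ℝ) < R ^ β := Real.rpow_pos_of_pos hR0 β
    set D : ℝ := (R ^ β) ^ k / R / Real.exp R with hD
    have hDpos : (0:ℝ) < D := by positivity
    have hDle : D ≤ Real.Gamma (β * k + 1) := by rwa [hRb] at hΓlb
    have h3 : |x| ^ k / Real.Gamma (β * k + 1) ≤ |x| ^ k / D :=
      div_le_div_of_nonneg_left (by positivity) hDpos hDle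
    refine h3.trans ?_
    have hratio : |x| ^ k / (R ^ β) ^ k ≤ (1 / 2) ^ k := by
      rw [← div_pow]
      apply pow_le_pow_left₀ (by positivity)
      rw [div_le_div_iff₀ hRβpos two_pos] at *
      nlinarith [abs_nonneg x]
    calc |x| ^ k / D = Real.exp R * R * (|x| ^ k / (R ^ β) ^ k) := by
          rw [hD]; field_simp
      _ ≤ Real.exp R * R * (1 / 2) ^ k := by
          apply mul_le_mul_of_nonneg_left hratio (by positivity)
  apply Summable.of_norm_bounded_eventually_nat (g := fun k => (Real.exp R * R) * (1 / 2) ^ k)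
  · exact (summable_geometric_of_lt_one (by norm_num) (by norm_num)).mul_left _
  · filter_upwards [Filter.eventually_ge_atTop ⌈1 / β⌉₊] with k hk
    apply key
    have h1 : (1:ℝ) / β ≤ (k : ℝ) := le_trans (Nat.le_ceil _) (by exact_mod_cast hk)
    rw [div_le_iff₀ hβ] at h1
    linarith [h1]

set_option maxHeartbeats 1000000

/-- Laplace transform of `t ↦ 1 − E_β(-a t^β)`:
it is absolutely integrable and equals `a / (s (s^β + a))` for `s^β > |a|`. -/
theorem laplace_one_sub_mittagLeffler (β a s : ℝ) (hβ : 0 < β)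
    (hs : 0 < s) (hsa : |a| < s ^ β) :
    IntegrableOn
      (fun t : ℝ => Real.exp (-s * t) * (1 - mittagLeffler β 1 (-a * t ^ β))) (Set.Ioi 0) ∧
    ∫ t in Set.Ioi (0:ℝ), Real.exp (-s * t) * (1 - mittagLeffler β 1 (-a * t ^ β))
      = a / (s * (s ^ β + a)) := by
  have hsβ : (0:ℝ) < s ^ β := Real.rpow_pos_of_pos hs β
  have habs := abs_lt.mp hsa
  have hsa' : (0:ℝ) < s ^ β + a := by linarith [habs.1]
  set G : ℕ → ℝ → ℝ := fun k t =>
    Real.exp (-s * t) * -((-a * t ^ β) ^ (k + 1) / Real.Gamma (β * (k + 1 : ℕ) + 1)) with hGdef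
  have hsumx : ∀ y : ℝ, Summable (fun k : ℕ => y ^ k / Real.Gamma (β * k + 1)) :=
    summable_ml β hβ
  have hΓpos : ∀ k : ℕ, (0:ℝ) < Real.Gamma (β * (k + 1 : ℕ) + 1) := by
    intro k
    apply Real.Gamma_pos_of_pos
    have : (0:ℝ) < (k + 1 : ℕ) := by positivity
    nlinarith
  -- pointwise identity
  have hpt : ∀ t : ℝ, Real.exp (-s * t) * (1 - mittagLeffler β 1 (-a * t ^ β)) = ∑' k, G k t := by
    intro t
    set y := -a * t ^ β with hy
    have h0 := Summable.tsum_eq_zero_add (hsumx y)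
    simp only [pow_zero, Nat.cast_zero, mul_zero, zero_add, Real.Gamma_one, div_one] at h0
    have hml : mittagLeffler β 1 y = 1 + ∑' k : ℕ, y ^ (k + 1) / Real.Gamma (β * (k + 1 : ℕ) + 1) := by
      rw [mittagLeffler]; exact h0
    rw [hml]
    have : ∑' k, G k t
        = Real.exp (-s * t) * -(∑' k : ℕ, y ^ (k + 1) / Real.Gamma (β * (k + 1 : ℕ) + 1)) := by
      rw [← tsum_neg, ← tsum_mul_left]
    rw [this]; ring
  -- summability in k for fixed t
  have hshift : ∀ y : ℝ, Summable (fun k : ℕ => y ^ (k + 1) / Real.Gamma (β * (k + 1 : ℕ) + 1)) := by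
    intro y
    exact (summable_nat_add_iff 1).mpr (hsumx y)
  have hGsum : ∀ t : ℝ, Summable (fun k => G k t) := by
    intro t
    exact (((hshift (-a * t ^ β)).neg).mul_left _)
  have hGnormsum : ∀ t : ℝ, Summable (fun k => ‖G k t‖) := by
    intro t
    have := ((hshift |(-a * t ^ β)|).mul_left (Real.exp (-s * t)))
    apply this.congr
    intro k
    rw [hGdef]
    simp only [norm_mul, norm_neg, norm_div, Real.norm_eq_abs, Real.abs_exp,
      abs_of_pos (hΓpos k), abs_pow]
    try ring
  -- integrability of each G k
  have hc : ∀ k : ℕ, ∀ t ∈ Set.Ioi (0:ℝ),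
      G k t = (-((-a) ^ (k + 1) / Real.Gamma (β * (k + 1 : ℕ) + 1)))
        * (t ^ (β * ((k:ℝ) + 1)) * Real.exp (-(s * t))) := by
    intro k t ht
    have ht' : (0:ℝ) < t := ht
    have hpow : t ^ (β * ((k:ℝ) + 1)) = (t ^ β) ^ (k + 1) := by
      rw [← Real.rpow_natCast (t ^ β) (k + 1), ← Real.rpow_mul ht'.le]
      push_cast; try ring_nf
    rw [hGdef, hpow]
    push_cast
    try ring
  have hGint : ∀ k : ℕ, IntegrableOn (G k) (Set.Ioi 0) := by
    intro k
    have hexp : (-1:ℝ) < β * ((k:ℝ) + 1) := by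
      have : (0:ℝ) < β * ((k:ℝ) + 1) := mul_pos hβ (by positivity)
      linarith
    have base : IntegrableOn
        (fun t : ℝ => t ^ (β * ((k:ℝ) + 1)) * Real.exp (-s * t ^ (1:ℝ))) (Set.Ioi 0) :=
      integrableOn_rpow_mul_exp_neg_mul_rpow hexp zero_lt_one hs
    have base' := base.const_mul (-((-a) ^ (k + 1) / Real.Gamma (β * (k + 1 : ℕ) + 1)))
    apply MeasureTheory.IntegrableOn.congr_fun base' ?_ measurableSet_Ioi
    intro t ht
    rw [hc k t ht]
    simp only [Real.rpow_one, neg_mul]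
  -- the basic Gamma integral
  have hbase_int : ∀ k : ℕ, ∫ t in Set.Ioi (0:ℝ), t ^ (β * ((k:ℝ) + 1)) * Real.exp (-(s * t))
      = (1 / s) ^ (β * ((k:ℝ) + 1) + 1) * Real.Gamma (β * ((k:ℝ) + 1) + 1) := by
    intro k
    have h0 : (0:ℝ) < β * ((k:ℝ) + 1) + 1 := by
      have : (0:ℝ) < β * ((k:ℝ) + 1) := mul_pos hβ (by positivity)
      linarith
    have := Real.integral_rpow_mul_exp_neg_mul_Ioi h0 hs
    simpa using this
  have h1s : (0:ℝ) < 1 / s := by positivity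
  have hsplit : ∀ k : ℕ, ((1:ℝ) / s) ^ (β * ((k:ℝ) + 1) + 1) = (1 / s) * ((1 / s ^ β)) ^ (k + 1) := by
    intro k
    rw [Real.rpow_add h1s, Real.rpow_one]
    have h2 : ((1:ℝ)/s) ^ (β*((k:ℝ)+1)) = (((1:ℝ)/s) ^ β) ^ (k+1) := by
      rw [← Real.rpow_natCast (((1:ℝ)/s) ^ β) (k+1), ← Real.rpow_mul h1s.le]
      push_cast; ring_nf
    have h3 : ((1:ℝ)/s) ^ β = 1 / s ^ β := by
      rw [one_div, Real.inv_rpow hs.le, one_div]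
    rw [h2, h3]; ring
  have hΓne : ∀ k : ℕ, Real.Gamma (β * ((k:ℝ) + 1) + 1) ≠ 0 := by
    intro k
    have := hΓpos k
    push_cast at this ⊢
    linarith
  have hGvalint : ∀ k : ℕ, ∫ t in Set.Ioi (0:ℝ), G k t = -(1/s) * ((-a) / s ^ β) ^ (k+1) := by
    intro k
    rw [setIntegral_congr_fun measurableSet_Ioi (hc k), MeasureTheory.integral_const_mul,
      hbase_int k, hsplit k]
    rw [div_pow, div_pow]
    have hΓ := hΓne k
    push_cast at hΓ ⊢
    field_simp
    ring
  have hGnormint : ∀ k : ℕ, ∫ t in Set.Ioi (0:ℝ), ‖G k t‖ = (1/s) * (|a| / s ^ β) ^ (k+1) := by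
    intro k
    have heq : Set.EqOn (fun t => ‖G k t‖)
        (fun t => (|a| ^ (k+1) / Real.Gamma (β * ((k:ℝ) + 1) + 1))
          * (t ^ (β * ((k:ℝ) + 1)) * Real.exp (-(s * t)))) (Set.Ioi 0) := by
      intro t ht
      have ht' : (0:ℝ) < t := ht
      have h1 := hc k t ht
      simp only
      have hbase_pos : (0:ℝ) ≤ t ^ (β * ((k:ℝ) + 1)) * Real.exp (-(s * t)) := by positivity
      rw [h1, norm_mul, Real.norm_eq_abs, Real.norm_eq_abs, abs_of_nonneg hbase_pos]
      have hg := hΓpos k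
      push_cast at hg ⊢
      rw [abs_neg, abs_div, abs_pow, abs_neg, abs_of_pos hg]
    rw [setIntegral_congr_fun measurableSet_Ioi heq, MeasureTheory.integral_const_mul,
      hbase_int k, hsplit k]
    rw [div_pow, div_pow]
    have hΓ := hΓne k
    field_simp
    try ring
  have hr1 : |a| / s ^ β < 1 := (div_lt_one hsβ).2 hsa
  have hr0 : (0:ℝ) ≤ |a| / s ^ β := by positivity
  set μ := volume.restrict (Set.Ioi (0:ℝ)) with hμ
  have hmeas : ∀ k, AEStronglyMeasurable (G k) μ := fun k => (hGint k).aestronglyMeasurable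
  have hf' : ∑' k, ∫⁻ t, ‖G k t‖₊ ∂μ ≠ ⊤ := by
    have heach : ∀ k : ℕ, ∫⁻ t, ‖G k t‖₊ ∂μ = ENNReal.ofReal ((1/s) * (|a| / s ^ β) ^ (k+1)) := by
      intro k
      simp only [← enorm_eq_nnnorm]
      rw [← MeasureTheory.ofReal_integral_norm_eq_lintegral_enorm (hGint k), hGnormint k]
    have hsumgeo : Summable (fun k : ℕ => (1/s) * (|a| / s ^ β) ^ (k+1)) := by
      apply Summable.mul_left
      exact (summable_nat_add_iff 1).mpr (summable_geometric_of_lt_one hr0 hr1)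
    rw [tsum_congr heach, ← ENNReal.ofReal_tsum_of_nonneg (fun k => by positivity) hsumgeo]
    exact ENNReal.ofReal_ne_top
  have htsum_int : IntegrableOn (fun t => ∑' k, G k t) (Set.Ioi 0) := by
    refine ⟨?_, ?_⟩
    · apply aestronglyMeasurable_of_tendsto_ae (f := fun n t => ∑ k ∈ Finset.range n, G k t)
        (u := Filter.atTop) (fun n => Finset.aestronglyMeasurable_fun_sum _ (fun k _ => hmeas k))
      exact Filter.Eventually.of_forall (fun t => (hGsum t).hasSum.tendsto_sum_nat)
    · have hb : ∀ t : ℝ, (‖∑' k, G k t‖₊ : ℝ≥0∞) ≤ ∑' k, (‖G k t‖₊ : ℝ≥0∞) := by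
        intro t
        have hsnn : Summable (fun k => ‖G k t‖₊) := by
          rw [← NNReal.summable_coe]
          simpa [coe_nnnorm] using hGnormsum t
        have h1 : ‖∑' k, G k t‖₊ ≤ ∑' k, ‖G k t‖₊ := nnnorm_tsum_le hsnn
        calc (‖∑' k, G k t‖₊ : ℝ≥0∞) ≤ ((∑' k, ‖G k t‖₊ : ℝ≥0) : ℝ≥0∞) := ENNReal.coe_le_coe.2 h1
          _ = ∑' k, (‖G k t‖₊ : ℝ≥0∞) := ENNReal.coe_tsum hsnn
      show (∫⁻ t, ‖∑' k, G k t‖₊ ∂μ) < ⊤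
      calc (∫⁻ t, ‖∑' k, G k t‖₊ ∂μ) ≤ ∫⁻ t, ∑' k, (‖G k t‖₊ : ℝ≥0∞) ∂μ :=
            lintegral_mono (fun t => hb t)
        _ = ∑' k, ∫⁻ t, ‖G k t‖₊ ∂μ := lintegral_tsum (fun k => (hmeas k).enorm)
        _ < ⊤ := lt_top_iff_ne_top.2 hf'
  have hfun : (fun t : ℝ => Real.exp (-s * t) * (1 - mittagLeffler β 1 (-a * t ^ β)))
      = fun t => ∑' k, G k t := funext hpt
  rw [hfun]
  refine ⟨htsum_int, ?_⟩
  rw [show (∫ t in Set.Ioi (0:ℝ), ∑' k, G k t) = ∫ t, ∑' k, G k t ∂μ from rfl,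
    MeasureTheory.integral_tsum hmeas hf']
  have hQ : ‖(-a) / s ^ β‖ < 1 := by
    rw [Real.norm_eq_abs, abs_div, abs_neg, abs_of_pos hsβ]
    exact (div_lt_one hsβ).2 hsa
  have hval : ∀ k : ℕ, (∫ t, G k t ∂μ) = -(1/s) * ((-a) / s ^ β) ^ (k+1) := hGvalint
  rw [tsum_congr hval]
  have hgeo : ∑' k : ℕ, (-(1/s) * ((-a) / s ^ β) ^ (k+1))
      = -(1/s) * (((-a) / s ^ β) * (1 - (-a) / s ^ β)⁻¹) := by
    rw [tsum_mul_left]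
    congr 1
    have hstep : ∀ k : ℕ, ((-a) / s ^ β) ^ (k+1) = ((-a) / s ^ β) * ((-a) / s ^ β) ^ k :=
      fun k => pow_succ' _ _
    rw [tsum_congr hstep, tsum_mul_left, tsum_geometric_of_norm_lt_one hQ]
  rw [hgeo]
  have hne : 1 - (-a) / s ^ β ≠ 0 := by
    have : 1 - (-a) / s ^ β = (s ^ β + a) / s ^ β := by field_simp; ring
    rw [this]
    positivity
  have hsa'' : a + s ^ β ≠ 0 := by linarith
  field_simp
  ring_nf
  field_simp
  ring
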